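/- arXiv:2006.14963 — 5 statements merged into one kernel-verified Lean document; each statement's English description precedes it below -/
import Mathlib

section
/- Let p ≥ 2 be a natural number and let Φ: ℝⁿ → ℝⁿ be p-times continuously differentiable on a neighborhood of a point ξ with Φ(ξ) = ξ, and assume that all derivatives of Φ of orders 1 through p − 1 vanish at ξ (i.e., the iterated Fréchet derivatives D^j Φ(ξ) = 0 for 1 ≤ j ≤ p − 1). If a sequence defined by x_{i+1} = Φ(x_i) converges to ξ, then there exist a constant C ≥ 0 and an index N such that ‖x_{i+1} − ξ‖ ≤ C ‖x_i − ξ‖^p for all i ≥ N; that is, the iteration has order of convergence at least p. -/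
/-- Case `p ≥ 2` of the order-of-convergence theorem: if `Φ : ℝⁿ → ℝⁿ` is
`p`-times continuously differentiable on a neighborhood of a fixed point `ξ`
and all its iterated Fréchet derivatives of orders `1, …, p - 1` vanish at
`ξ`, then any orbit of the fixed point iteration converging to `ξ` has order
of convergence at least `p`. -/
theorem fixed_point_iteration_order_p_convergence
    {n : ℕ} (p : ℕ) (hp : 2 ≤ p)
    (Φ : EuclideanSpace ℝ (Fin n) → EuclideanSpace ℝ (Fin n))
    (ξ : EuclideanSpace ℝ (Fin n))
    (hΦ : ∃ s ∈ nhds ξ, ContDiffOn ℝ p Φ s)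
    (hfix : Φ ξ = ξ)
    (hvanish : ∀ j : ℕ, 1 ≤ j → j ≤ p - 1 → iteratedFDeriv ℝ j Φ ξ = 0)
    (x : ℕ → EuclideanSpace ℝ (Fin n))
    (hx : ∀ i, x (i + 1) = Φ (x i))
    (hconv : Filter.Tendsto x Filter.atTop (nhds ξ)) :
    ∃ C : ℝ, 0 ≤ C ∧ ∃ N : ℕ, ∀ i ≥ N, ‖x (i + 1) - ξ‖ ≤ C * ‖x i - ξ‖ ^ p := by
  obtain ⟨s, hs, hcd⟩ := hΦ
  -- work on an open ball inside the interior of `s`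
  obtain ⟨r, hr, hball⟩ := Metric.mem_nhds_iff.1 (interior_mem_nhds.2 hs)
  have hcdI : ContDiffOn ℝ p Φ (interior s) := hcd.mono interior_subset
  -- pointwise smoothness on the ball
  have hCAt : ∀ y ∈ Metric.ball ξ r, ContDiffAt ℝ p Φ y := fun y hy =>
    hcdI.contDiffAt (isOpen_interior.mem_nhds (hball hy))
  set r' : ℝ := r / 2 with hr'
  have hr'pos : 0 < r' := by positivity
  set K : Set (EuclideanSpace ℝ (Fin n)) := Metric.closedBall ξ r' with hK
  have hKball : K ⊆ Metric.ball ξ r :=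
    (Metric.closedBall_subset_ball (by linarith)).trans (subset_refl _)
  have hKcompact : IsCompact K := isCompact_closedBall ξ r'
  have hξK : ξ ∈ K := Metric.mem_closedBall_self hr'pos.le
  -- bound the `p`-th derivative on `K`
  have hcont : ContinuousOn (fun y => iteratedFDeriv ℝ p Φ y) K := by
    intro y hy
    exact ((hCAt y (hKball hy)).iteratedFDeriv_right (m := 0) (by simp)).continuousAt.continuousWithinAt
  obtain ⟨C0, hC0⟩ := hKcompact.exists_bound_of_continuousOn hcont
  set M : ℝ := max C0 0 with hM
  have hMnonneg : 0 ≤ M := le_max_right _ _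
  have hMbound : ∀ y ∈ K, ‖iteratedFDeriv ℝ p Φ y‖ ≤ M := fun y hy =>
    (hC0 y hy).trans (le_max_left _ _)
  -- main induction: for `d ≤ p - 1`, `‖D^(p-d) Φ y‖ ≤ M ‖y - ξ‖ ^ d` on `K`
  have claim : ∀ d : ℕ, d ≤ p - 1 → ∀ y ∈ K,
      ‖iteratedFDeriv ℝ (p - d) Φ y‖ ≤ M * ‖y - ξ‖ ^ d := by
    intro d
    induction d with
    | zero => intro _ y hy; simpa using hMbound y hy
    | succ d ih =>
      intro hd y hy
      have hd' : d ≤ p - 1 := Nat.le_of_succ_le hd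
      have hdp : d + 1 ≤ p - 1 := hd
      have hp1 : 1 ≤ p := by omega
      set k : ℕ := p - (d + 1) with hk
      have hk1 : 1 ≤ k := by omega
      have hkp : k + 1 = p - d := by omega
      have hkle : k + 1 ≤ p := by omega
      have hFξ : iteratedFDeriv ℝ k Φ ξ = 0 := hvanish k hk1 (by omega)
      -- the function whose difference we estimate
      set F : EuclideanSpace ℝ (Fin n) →
          ContinuousMultilinearMap ℝ (fun _ : Fin k => EuclideanSpace ℝ (Fin n))
            (EuclideanSpace ℝ (Fin n)) := iteratedFDeriv ℝ k Φ with hF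
      have hyK : ‖y - ξ‖ ≤ r' := by
        simpa [dist_eq_norm] using Metric.mem_closedBall.1 hy
      have hsub : Metric.closedBall ξ ‖y - ξ‖ ⊆ K :=
        Metric.closedBall_subset_closedBall hyK
      have hdiffF : ∀ z ∈ Metric.closedBall ξ ‖y - ξ‖,
          HasFDerivWithinAt F (fderiv ℝ F z) (Metric.closedBall ξ ‖y - ξ‖) z := by
        intro z hz
        have : ContDiffAt ℝ 1 F z := by
          apply (hCAt z (hKball (hsub hz))).iteratedFDeriv_right
          norm_cast
          omega
        exact (this.differentiableAt one_ne_zero).hasFDerivAt.hasFDerivWithinAt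
      have hboundF : ∀ z ∈ Metric.closedBall ξ ‖y - ξ‖,
          ‖fderiv ℝ F z‖ ≤ M * ‖y - ξ‖ ^ d := by
        intro z hz
        have hz' : ‖z - ξ‖ ≤ ‖y - ξ‖ := by
          simpa [dist_eq_norm] using Metric.mem_closedBall.1 hz
        have h1 : ‖fderiv ℝ F z‖ = ‖iteratedFDeriv ℝ (k + 1) Φ z‖ :=
          norm_fderiv_iteratedFDeriv
        rw [h1, hkp]
        calc ‖iteratedFDeriv ℝ (p - d) Φ z‖ ≤ M * ‖z - ξ‖ ^ d := ih hd' z (hsub hz)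
          _ ≤ M * ‖y - ξ‖ ^ d := by gcongr
      have hconv' : Convex ℝ (Metric.closedBall ξ ‖y - ξ‖) := convex_closedBall _ _
      have hymem : y ∈ Metric.closedBall ξ ‖y - ξ‖ := by
        simp [Metric.mem_closedBall, dist_eq_norm]
      have hξmem : ξ ∈ Metric.closedBall ξ ‖y - ξ‖ :=
        Metric.mem_closedBall_self (norm_nonneg _)
      have := hconv'.norm_image_sub_le_of_norm_hasFDerivWithin_le hdiffF hboundF hξmem hymem
      rw [hFξ] at this
      calc ‖iteratedFDeriv ℝ (p - (d + 1)) Φ y‖ = ‖F y - 0‖ := by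
            show ‖F y‖ = ‖F y - 0‖
            rw [sub_zero]
        _ ≤ M * ‖y - ξ‖ ^ d * ‖y - ξ‖ := this
        _ = M * ‖y - ξ‖ ^ (d + 1) := by ring
  -- final step: bound `‖Φ y - Φ ξ‖` on `K`
  have key : ∀ y ∈ K, ‖Φ y - ξ‖ ≤ M * ‖y - ξ‖ ^ p := by
    intro y hy
    have hp1 : 1 ≤ p := by omega
    set F : EuclideanSpace ℝ (Fin n) →
        ContinuousMultilinearMap ℝ (fun _ : Fin 0 => EuclideanSpace ℝ (Fin n))
          (EuclideanSpace ℝ (Fin n)) := iteratedFDeriv ℝ 0 Φ with hF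
    have hyK : ‖y - ξ‖ ≤ r' := by
      simpa [dist_eq_norm] using Metric.mem_closedBall.1 hy
    have hsub : Metric.closedBall ξ ‖y - ξ‖ ⊆ K :=
      Metric.closedBall_subset_closedBall hyK
    have hdiffF : ∀ z ∈ Metric.closedBall ξ ‖y - ξ‖,
        HasFDerivWithinAt F (fderiv ℝ F z) (Metric.closedBall ξ ‖y - ξ‖) z := by
      intro z hz
      have : ContDiffAt ℝ 1 F z := by
        apply (hCAt z (hKball (hsub hz))).iteratedFDeriv_right
        norm_cast
      exact (this.differentiableAt one_ne_zero).hasFDerivAt.hasFDerivWithinAt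
    have hboundF : ∀ z ∈ Metric.closedBall ξ ‖y - ξ‖,
        ‖fderiv ℝ F z‖ ≤ M * ‖y - ξ‖ ^ (p - 1) := by
      intro z hz
      have hz' : ‖z - ξ‖ ≤ ‖y - ξ‖ := by
        simpa [dist_eq_norm] using Metric.mem_closedBall.1 hz
      have h1 : ‖fderiv ℝ F z‖ = ‖iteratedFDeriv ℝ 1 Φ z‖ := norm_fderiv_iteratedFDeriv
      have h2 := claim (p - 1) le_rfl z (hsub hz)
      have hpp : p - (p - 1) = 1 := by omega
      rw [hpp] at h2
      rw [h1]
      calc ‖iteratedFDeriv ℝ 1 Φ z‖ ≤ M * ‖z - ξ‖ ^ (p - 1) := h2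
        _ ≤ M * ‖y - ξ‖ ^ (p - 1) := by gcongr
    have hconv' : Convex ℝ (Metric.closedBall ξ ‖y - ξ‖) := convex_closedBall _ _
    have hymem : y ∈ Metric.closedBall ξ ‖y - ξ‖ := by
      simp [Metric.mem_closedBall, dist_eq_norm]
    have hξmem : ξ ∈ Metric.closedBall ξ ‖y - ξ‖ :=
      Metric.mem_closedBall_self (norm_nonneg _)
    have hest := hconv'.norm_image_sub_le_of_norm_hasFDerivWithin_le hdiffF hboundF hξmem hymem
    have hnormFdiff : ‖F y - F ξ‖ = ‖Φ y - Φ ξ‖ := by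
      rw [hF, iteratedFDeriv_zero_eq_comp]
      simp only [Function.comp_apply]
      rw [← LinearIsometryEquiv.map_sub, LinearIsometryEquiv.norm_map]
    rw [hnormFdiff, hfix] at hest
    calc ‖Φ y - ξ‖ ≤ M * ‖y - ξ‖ ^ (p - 1) * ‖y - ξ‖ := hest
      _ = M * ‖y - ξ‖ ^ p := by
          rw [mul_assoc, ← pow_succ, Nat.sub_add_cancel hp1]
  -- conclude using convergence
  refine ⟨M, hMnonneg, ?_⟩
  have hev : ∀ᶠ i in Filter.atTop, x i ∈ K := by
    apply hconv
    exact Metric.closedBall_mem_nhds ξ hr'pos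
  obtain ⟨N, hN⟩ := hev.exists_forall_of_atTop
  refine ⟨N, fun i hi => ?_⟩
  rw [hx i]
  exact key (x i) (hN i hi)
end

section
/- Let c ≤ a < x be real numbers, let μ > −1 and let α < 0. Then the Riemann–Liouville fractional derivative of order α with base point a of the function t ↦ (t − c)^μ, evaluated at x, satisfies (1/Γ(−α)) ∫_a^x (x − t)^{−α−1} (t − c)^μ dt = (Γ(μ+1)/Γ(μ−α+1)) (x − c)^{μ−α} · G_{−α}((a−c)/(x−c), μ+1), where G_β(r, p) := 1 − B_r(p, β)/B(p, β). -/
/-- The (complete) Beta function `B(p, q) = ∫_0^1 t^{p-1} (1-t)^{q-1} dt`. -/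
noncomputable def betaFun (p q : ℝ) : ℝ :=
  ∫ t in (0:ℝ)..1, t ^ (p - 1) * (1 - t) ^ (q - 1)

/-- The incomplete Beta function `B_r(p, q) = ∫_0^r t^{p-1} (1-t)^{q-1} dt`. -/
noncomputable def incBetaFun (r p q : ℝ) : ℝ :=
  ∫ t in (0:ℝ)..r, t ^ (p - 1) * (1 - t) ^ (q - 1)

/-- `G_β(r, p) := 1 - B_r(p, β) / B(p, β)`. -/
noncomputable def Gfun (β r p : ℝ) : ℝ :=
  1 - incBetaFun r p β / betaFun p β

open MeasureTheory intervalIntegral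

lemma ofReal_beta_integrand {p q t : ℝ} (h0 : 0 ≤ t) (h1 : t ≤ 1) :
    ((t ^ (p - 1) * (1 - t) ^ (q - 1) : ℝ) : ℂ)
      = (t : ℂ) ^ ((p : ℂ) - 1) * ((1 : ℂ) - t) ^ ((q : ℂ) - 1) := by
  push_cast
  rw [Complex.ofReal_cpow h0, Complex.ofReal_cpow (by linarith)]
  push_cast
  ring

lemma betaIntegrand_intervalIntegrable {p q : ℝ} (hp : 0 < p) (hq : 0 < q) :
    IntervalIntegrable (fun t : ℝ => t ^ (p - 1) * (1 - t) ^ (q - 1)) volume 0 1 := by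
  have hC := Complex.betaIntegral_convergent (u := (p : ℂ)) (v := (q : ℂ)) (by simpa) (by simpa)
  rw [intervalIntegrable_iff] at hC ⊢
  have := hC.re
  refine this.congr ?_
  filter_upwards [ae_restrict_mem measurableSet_uIoc] with t ht
  rw [Set.uIoc_of_le (by norm_num : (0:ℝ) ≤ 1)] at ht
  rw [← ofReal_beta_integrand ht.1.le ht.2]
  simp [Complex.ofReal_re]

lemma betaFun_eq_Gamma {p q : ℝ} (hp : 0 < p) (hq : 0 < q) :
    betaFun p q = Real.Gamma p * Real.Gamma q / Real.Gamma (p + q) := by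
  have h := Complex.Gamma_mul_Gamma_eq_betaIntegral (s := (p : ℂ)) (t := (q : ℂ))
    (by simpa) (by simpa)
  have hb : Complex.betaIntegral p q = ((betaFun p q : ℝ) : ℂ) := by
    rw [Complex.betaIntegral, betaFun, ← intervalIntegral.integral_ofReal]
    refine intervalIntegral.integral_congr fun t ht => ?_
    rw [Set.uIcc_of_le (by norm_num : (0:ℝ) ≤ 1)] at ht
    exact (ofReal_beta_integrand ht.1 ht.2).symm
  rw [hb, show (p : ℂ) + q = ((p + q : ℝ) : ℂ) by push_cast; ring,
    Complex.Gamma_ofReal, Complex.Gamma_ofReal, Complex.Gamma_ofReal,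
    ← Complex.ofReal_mul, ← Complex.ofReal_mul] at h
  have h' := Complex.ofReal_inj.mp h
  have hG : Real.Gamma (p + q) ≠ 0 := (Real.Gamma_pos_of_pos (by positivity)).ne'
  field_simp
  linarith [h']

/-- Case `α < 0` of the Riemann–Liouville fractional derivative of the power
function `t ↦ (t - c)^μ` with base point `a`:
`D_a^α (x - c)^μ = Γ(μ+1)/Γ(μ-α+1) · (x - c)^{μ-α} · G_{-α}((a-c)/(x-c), μ+1)`. -/
theorem riemannLiouville_deriv_power_neg_order
    (a c x μ α : ℝ) (hca : c ≤ a) (hax : a < x) (hμ : -1 < μ) (hα : α < 0) :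
    (1 / Real.Gamma (-α)) * ∫ t in a..x, (x - t) ^ (-α - 1) * (t - c) ^ μ
      = (Real.Gamma (μ + 1) / Real.Gamma (μ - α + 1)) * (x - c) ^ (μ - α) *
        Gfun (-α) ((a - c) / (x - c)) (μ + 1) := by
  have hxc : (0:ℝ) < x - c := by linarith
  set r : ℝ := (a - c) / (x - c) with hrdef
  have hp : (0:ℝ) < μ + 1 := by linarith
  have hq : (0:ℝ) < -α := by linarith
  have hr0 : 0 ≤ r := div_nonneg (by linarith) hxc.le
  have hr1 : r ≤ 1 := by rw [div_le_one hxc]; linarith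
  set g : ℝ → ℝ := fun t => t ^ μ * (1 - t) ^ (-α - 1) with hg
  have hgint : IntervalIntegrable g volume 0 1 := by
    have := betaIntegrand_intervalIntegrable hp hq
    simpa [hg, show μ + 1 - 1 = μ by ring] using this
  -- change of variables t = (x-c) s + c
  have h1 : ∫ s in r..1, (x - ((x - c) * s + c)) ^ (-α - 1) * (((x - c) * s + c) - c) ^ μ
      = (x - c)⁻¹ • ∫ t in ((x - c) * r + c)..((x - c) * 1 + c),
          (x - t) ^ (-α - 1) * (t - c) ^ μ :=
    intervalIntegral.integral_comp_mul_add
      (fun t => (x - t) ^ (-α - 1) * (t - c) ^ μ) hxc.ne' c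
  have hend1 : (x - c) * r + c = a := by
    rw [hrdef, mul_div_assoc', mul_comm, mul_div_assoc, div_self hxc.ne', mul_one]; ring
  have hend2 : (x - c) * 1 + c = x := by ring
  rw [hend1, hend2] at h1
  -- rewrite the substituted integrand
  have h2 : ∫ s in r..1, (x - ((x - c) * s + c)) ^ (-α - 1) * (((x - c) * s + c) - c) ^ μ
      = (x - c) ^ (-α - 1) * (x - c) ^ μ * ∫ s in r..1, g s := by
    rw [← intervalIntegral.integral_const_mul]
    refine intervalIntegral.integral_congr fun s hs => ?_
    rw [Set.uIcc_of_le hr1] at hs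
    have hs0 : 0 ≤ s := le_trans hr0 hs.1
    have hs1 : 0 ≤ 1 - s := by linarith [hs.2]
    have e1 : x - ((x - c) * s + c) = (x - c) * (1 - s) := by ring
    have e2 : ((x - c) * s + c) - c = (x - c) * s := by ring
    rw [e1, e2, Real.mul_rpow hxc.le hs1, Real.mul_rpow hxc.le hs0]
    simp only [hg]
    ring
  have h3 : ∫ t in a..x, (x - t) ^ (-α - 1) * (t - c) ^ μ
      = (x - c) * ((x - c) ^ (-α - 1) * (x - c) ^ μ * ∫ s in r..1, g s) := by
    rw [← h2, h1, smul_eq_mul, ← mul_assoc, mul_inv_cancel₀ hxc.ne', one_mul]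
  -- split the integral
  have hrmem : r ∈ Set.uIcc (0:ℝ) 1 := Set.mem_uIcc.mpr (Or.inl ⟨hr0, hr1⟩)
  have hsub1 : IntervalIntegrable g volume 0 r :=
    hgint.mono_set (Set.uIcc_subset_uIcc Set.left_mem_uIcc hrmem)
  have hsub2 : IntervalIntegrable g volume r 1 :=
    hgint.mono_set (Set.uIcc_subset_uIcc hrmem Set.right_mem_uIcc)
  have hsplit : ∫ s in r..1, g s = (∫ s in (0:ℝ)..1, g s) - ∫ s in (0:ℝ)..r, g s := by
    rw [← intervalIntegral.integral_add_adjacent_intervals hsub1 hsub2]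
    ring
  have hB : betaFun (μ + 1) (-α) = ∫ s in (0:ℝ)..1, g s := by
    unfold betaFun
    refine intervalIntegral.integral_congr fun t ht => ?_
    simp [hg, show μ + 1 - 1 = μ by ring]
  have hI : incBetaFun r (μ + 1) (-α) = ∫ s in (0:ℝ)..r, g s := by
    unfold incBetaFun
    refine intervalIntegral.integral_congr fun t ht => ?_
    simp [hg, show μ + 1 - 1 = μ by ring]
  -- Gamma facts
  have hBG : betaFun (μ + 1) (-α)
      = Real.Gamma (μ + 1) * Real.Gamma (-α) / Real.Gamma (μ - α + 1) := by
    rw [betaFun_eq_Gamma hp hq, show μ + 1 + -α = μ - α + 1 by ring]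
  have hG1 : 0 < Real.Gamma (μ + 1) := Real.Gamma_pos_of_pos hp
  have hG2 : 0 < Real.Gamma (-α) := Real.Gamma_pos_of_pos hq
  have hG3 : 0 < Real.Gamma (μ - α + 1) := Real.Gamma_pos_of_pos (by linarith)
  have hBpos : 0 < betaFun (μ + 1) (-α) := by rw [hBG]; positivity
  -- power arithmetic
  have hpow : (x - c) * ((x - c) ^ (-α - 1) * (x - c) ^ μ) = (x - c) ^ (μ - α) := by
    rw [show μ - α = 1 + (-α - 1) + μ by ring, Real.rpow_add hxc, Real.rpow_add hxc,
      Real.rpow_one]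
    ring
  rw [h3, hsplit, Gfun, ← hB, ← hI]
  rw [show (x - c) * ((x - c) ^ (-α - 1) * (x - c) ^ μ *
      (betaFun (μ + 1) (-α) - incBetaFun r (μ + 1) (-α)))
    = (x - c) * ((x - c) ^ (-α - 1) * (x - c) ^ μ) *
      (betaFun (μ + 1) (-α) - incBetaFun r (μ + 1) (-α)) by ring, hpow]
  rw [hBG]
  field_simp
end

section
/- Let a < x be real numbers, let μ > −1, let α > 0 be a non-integer real number and set n = ⌈α⌉. Then the n-th derivative with respect to x of the function y ↦ (1/Γ(n−α)) ∫_a^y (y − t)^{n−α−1} (t − a)^μ dt, evaluated at x, equals (Γ(μ+1)/Γ(μ−α+1)) (x − a)^{μ−α}; that is, the Riemann–Liouville fractional derivative of order α with base point a of t ↦ (t − a)^μ is Γ(μ+1)/Γ(μ−α+1) · (x − a)^{μ−α}. -/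
open Topology

open intervalIntegral Real

lemma real_beta (p q : ℝ) (hp : 0 < p) (hq : 0 < q) :
    ∫ s in (0:ℝ)..1, s ^ (p - 1) * (1 - s) ^ (q - 1)
      = Real.Gamma p * Real.Gamma q / Real.Gamma (p + q) := by
  have hB := Complex.Gamma_mul_Gamma_eq_betaIntegral (s := (p:ℂ)) (t := (q:ℂ))
    (by simpa using hp) (by simpa using hq)
  have hGpq : Real.Gamma (p + q) ≠ 0 :=
    (Real.Gamma_pos_of_pos (by linarith)).ne'
  have key : Complex.betaIntegral p q
      = ((∫ s in (0:ℝ)..1, s ^ (p - 1) * (1 - s) ^ (q - 1) : ℝ) : ℂ) := by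
    rw [Complex.betaIntegral, ← intervalIntegral.integral_ofReal]
    refine intervalIntegral.integral_congr fun s hs => ?_
    rw [Set.uIcc_of_le (by norm_num : (0:ℝ) ≤ 1)] at hs
    have h0 : (0:ℝ) ≤ s := hs.1
    have h1 : (0:ℝ) ≤ 1 - s := by linarith [hs.2]
    push_cast
    rw [show ((p:ℂ) - 1) = ((p - 1 : ℝ) : ℂ) by push_cast; ring,
      show ((q:ℂ) - 1) = ((q - 1 : ℝ) : ℂ) by push_cast; ring,
      show ((1:ℂ) - (s:ℝ)) = (((1 - s : ℝ)) : ℂ) by push_cast; ring,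
      Complex.ofReal_cpow h0, Complex.ofReal_cpow h1]
  rw [key] at hB
  have : ((Real.Gamma p * Real.Gamma q : ℝ) : ℂ)
      = ((Real.Gamma (p+q) * ∫ s in (0:ℝ)..1, s ^ (p - 1) * (1 - s) ^ (q - 1) : ℝ) : ℂ) := by
    push_cast
    simpa [Complex.Gamma_ofReal, ← Complex.ofReal_add] using hB
  have h2 := Complex.ofReal_inj.mp this
  field_simp
  linarith [h2]


lemma conv_scale (a y μ c : ℝ) (hay : a < y) :
    ∫ t in a..y, (y - t) ^ (c - 1) * (t - a) ^ μ
      = (y - a) ^ (μ + c) * ∫ s in (0:ℝ)..1, s ^ μ * (1 - s) ^ (c - 1) := by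
  have hL : 0 < y - a := by linarith
  have key := intervalIntegral.integral_comp_mul_add
    (a := (0:ℝ)) (b := 1) (f := fun t => (y - t) ^ (c - 1) * (t - a) ^ μ)
    (c := y - a) hL.ne' a
  simp only [mul_zero, zero_add, mul_one, sub_add_cancel] at key
  rw [eq_comm, inv_smul_eq_iff₀ hL.ne'] at key
  rw [key, smul_eq_mul, ← intervalIntegral.integral_const_mul,
    ← intervalIntegral.integral_const_mul]
  refine intervalIntegral.integral_congr fun s hs => ?_
  rw [Set.uIcc_of_le (by norm_num : (0:ℝ) ≤ 1)] at hs
  have h0 : (0:ℝ) ≤ s := hs.1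
  have h1s : (0:ℝ) ≤ 1 - s := by linarith [hs.2]
  have e1 : y - ((y - a) * s + a) = (y - a) * (1 - s) := by ring
  have e2 : (y - a) * s + a - a = (y - a) * s := by ring
  rw [e1, e2, Real.mul_rpow hL.le h1s, Real.mul_rpow hL.le h0]
  have e3 : (y - a) * ((y - a) ^ (c - 1) * (y - a) ^ μ) = (y - a) ^ (μ + c) := by
    rw [← Real.rpow_add hL, show μ + c = c - 1 + μ + 1 by ring,
      Real.rpow_add_one hL.ne']; ring
  rw [← e3]; ring


open Topology

lemma iter_rpow (a : ℝ) : ∀ (n : ℕ) (C p x : ℝ), a < x →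
    iteratedDeriv n (fun y => C * (y - a) ^ p) x
      = C * (∏ i ∈ Finset.range n, (p - i)) * (x - a) ^ (p - n) := by
  intro n
  induction n with
  | zero => intro C p x hx; simp
  | succ n ih =>
    intro C p x hx
    rw [iteratedDeriv_succ']
    have hev : deriv (fun y => C * (y - a) ^ p)
        =ᶠ[𝓝 x] (fun y => (C * p) * (y - a) ^ (p - 1)) := by
      filter_upwards [eventually_gt_nhds hx] with y hy
      have hb : HasDerivAt (fun y : ℝ => y - a) 1 y := (hasDerivAt_id y).sub_const a
      have h2 : HasDerivAt (fun y : ℝ => (y - a) ^ p)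
          (1 * p * (y - a) ^ (p - 1)) y :=
        hb.rpow_const (Or.inl (sub_ne_zero.mpr (ne_of_gt hy)))
      have h3 := (h2.const_mul C).deriv
      rw [h3]; ring
    rw [Filter.EventuallyEq.iteratedDeriv_eq n hev, ih (C * p) (p - 1) x hx,
      Finset.prod_range_succ']
    push_cast
    have e1 : ∀ i : ℕ, p - ((i : ℝ) + 1) = p - 1 - i := fun i => by ring
    have e2 : p - 1 - (n : ℝ) = p - ((n : ℝ) + 1) := by ring
    rw [e2]
    rw [show (∏ i ∈ Finset.range n, (p - ((i : ℝ) + 1)))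
        = ∏ i ∈ Finset.range n, (p - 1 - (i : ℝ)) from
      Finset.prod_congr rfl fun i _ => e1 i]
    ring


lemma gamma_shift : ∀ (n : ℕ) (z : ℝ), (∀ j : ℕ, j < n → z + j ≠ 0) →
    Real.Gamma (z + n) = (∏ j ∈ Finset.range n, (z + j)) * Real.Gamma z := by
  intro n
  induction n with
  | zero => intro z _; simp
  | succ n ih =>
    intro z hz
    have h1 : z + ((n : ℝ) + 1) = (z + n) + 1 := by ring
    push_cast
    rw [h1, Real.Gamma_add_one (by exact_mod_cast hz n (Nat.lt_succ_self n)),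
      ih z fun j hj => hz j (hj.trans (Nat.lt_succ_self n)), Finset.prod_range_succ]
    ring

lemma gamma_prod_div (μ α : ℝ) (n : ℕ) (hμ : -1 < μ) (hαn : α < n) :
    Real.Gamma (μ + 1) / Real.Gamma (μ + ((n : ℝ) - α) + 1)
        * ∏ i ∈ Finset.range n, (μ + ((n : ℝ) - α) - i)
      = Real.Gamma (μ + 1) / Real.Gamma (μ - α + 1) := by
  set z : ℝ := μ - α + 1 with hzdef
  have hzgt : -(n : ℝ) < z := by
    have : -α > -(n:ℝ) := by linarith
    simp only [hzdef]; linarith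
  have hzn : μ + ((n : ℝ) - α) + 1 = z + n := by ring
  have hprod : (∏ i ∈ Finset.range n, (μ + ((n : ℝ) - α) - i))
      = ∏ j ∈ Finset.range n, (z + j) := by
    rw [← Finset.prod_range_reflect (fun j => z + j) n]
    refine Finset.prod_congr rfl fun i hi => ?_
    have hi' : i < n := Finset.mem_range.mp hi
    have : ((n - 1 - i : ℕ) : ℝ) = (n : ℝ) - 1 - i := by
      have h1 : i ≤ n - 1 := Nat.le_sub_one_of_lt hi'
      have h2 : 1 ≤ n := Nat.one_le_of_lt (Nat.lt_of_le_of_lt (Nat.zero_le i) hi')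
      push_cast [Nat.cast_sub h1, Nat.cast_sub h2]
      ring
    rw [this]; simp only [hzdef]; ring
  rw [hzn, hprod]
  by_cases hdeg : ∃ j : ℕ, j < n ∧ z + j = 0
  · obtain ⟨j, hjn, hj0⟩ := hdeg
    have hΓz : Real.Gamma z = 0 := by
      have : z = -(j : ℝ) := by linarith
      rw [this]; exact Real.Gamma_neg_nat_eq_zero j
    have hp0 : (∏ j ∈ Finset.range n, (z + (j:ℝ))) = 0 :=
      Finset.prod_eq_zero (Finset.mem_range.mpr hjn) hj0
    rw [hp0, hΓz, div_zero, mul_zero]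
  · push_neg at hdeg
    have hz' : ∀ j : ℕ, j < n → z + j ≠ 0 := hdeg
    rw [gamma_shift n z hz']
    have hΓz : Real.Gamma z ≠ 0 := by
      refine Real.Gamma_ne_zero fun m hm => ?_
      have hmn : (m : ℝ) < n := by
        have h := hzgt; rw [hm] at h; linarith
      have hmn' : m < n := by exact_mod_cast hmn
      exact hz' m hmn' (by rw [hm]; ring)
    have hp : (∏ j ∈ Finset.range n, (z + (j:ℝ))) ≠ 0 :=
      Finset.prod_ne_zero_iff.mpr fun j hj => hz' j (Finset.mem_range.mp hj)
    field_simp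



/-- Case `α > 0` non-integer, `n = ⌈α⌉`, of the closed formula for the
Riemann–Liouville fractional derivative of `t ↦ (t - a)^μ` with base point `a`:
`(dⁿ/dxⁿ)[ (1/Γ(n-α)) ∫_a^x (x - t)^{n-α-1} (t - a)^μ dt ]
  = Γ(μ+1)/Γ(μ-α+1) · (x - a)^{μ-α}`. -/
theorem riemannLiouville_deriv_power_base_pos_order
    (a x μ α : ℝ) (n : ℕ) (hax : a < x) (hμ : -1 < μ) (hα : 0 < α)
    (hαint : ∀ m : ℤ, α ≠ (m : ℝ)) (hn : n = ⌈α⌉₊) :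
    iteratedDeriv n
        (fun y => (1 / Real.Gamma ((n : ℝ) - α)) *
          ∫ t in a..y, (y - t) ^ ((n : ℝ) - α - 1) * (t - a) ^ μ) x
      = (Real.Gamma (μ + 1) / Real.Gamma (μ - α + 1)) * (x - a) ^ (μ - α) := by
  have hαn : α < n := by
    have h1 : α ≤ (⌈α⌉₊ : ℝ) := Nat.le_ceil α
    have h2 : α ≠ (n : ℝ) := by
      have := hαint (n : ℤ); simpa using this
    rw [hn]; exact lt_of_le_of_ne (hn ▸ h1) (hn ▸ h2)
  have hc : 0 < (n : ℝ) - α := by linarith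
  have hΓc : Real.Gamma ((n : ℝ) - α) ≠ 0 := (Real.Gamma_pos_of_pos hc).ne'
  set C : ℝ := Real.Gamma (μ + 1) / Real.Gamma (μ + ((n : ℝ) - α) + 1) with hC
  have hev : (fun y => (1 / Real.Gamma ((n : ℝ) - α)) *
          ∫ t in a..y, (y - t) ^ ((n : ℝ) - α - 1) * (t - a) ^ μ)
      =ᶠ[𝓝 x] (fun y => C * (y - a) ^ (μ + ((n : ℝ) - α))) := by
    filter_upwards [eventually_gt_nhds hax] with y hy
    rw [conv_scale a y μ ((n : ℝ) - α) hy]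
    have hb := real_beta (μ + 1) ((n : ℝ) - α) (by linarith) hc
    simp only [add_sub_cancel_right] at hb
    rw [hb, hC]
    field_simp
    rw [show μ + 1 + ((n : ℝ) - α) = μ + ((n : ℝ) - α) + 1 by ring]
  rw [Filter.EventuallyEq.iteratedDeriv_eq n hev,
    iter_rpow a n C (μ + ((n : ℝ) - α)) x hax,
    show μ + ((n : ℝ) - α) - n = μ - α by ring, hC,
    gamma_prod_div μ α n hμ hαn]
end

section
/- Let a < x be real numbers, let α < 0, and let f be given on [a, x] by a convergent power series f(t) = Σ_{k=0}^∞ c_k (t − a)^k whose radius of convergence exceeds x − a. Then the Riemann–Liouville fractional derivative of order α of f with base point a can be computed term by term: (1/Γ(−α)) ∫_a^x (x − t)^{−α−1} f(t) dt = Σ_{k=0}^∞ c_k · (Γ(k+1)/Γ(k−α+1)) · (x − a)^{k−α}, the series on the right-hand side being convergent. -/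
open MeasureTheory intervalIntegral Real Set

/-- Real Beta function identity. -/
lemma real_beta_aux {p q : ℝ} (hp : 0 < p) (hq : 0 < q) :
    ∫ t in (0:ℝ)..1, t ^ (p - 1) * (1 - t) ^ (q - 1)
      = Real.Gamma p * Real.Gamma q / Real.Gamma (p + q) := by
  have h := Complex.Gamma_mul_Gamma_eq_betaIntegral (s := (p : ℂ)) (t := (q : ℂ))
    (by simpa using hp) (by simpa using hq)
  have hbeta : Complex.betaIntegral (p : ℂ) (q : ℂ)
      = ((∫ t in (0:ℝ)..1, t ^ (p - 1) * (1 - t) ^ (q - 1) : ℝ) : ℂ) := by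
    rw [Complex.betaIntegral, ← intervalIntegral.integral_ofReal]
    refine intervalIntegral.integral_congr fun t ht => ?_
    rw [Set.uIcc_of_le zero_le_one] at ht
    rw [Complex.ofReal_mul, Complex.ofReal_cpow ht.1 (p - 1),
      Complex.ofReal_cpow (by linarith [ht.2] : (0:ℝ) ≤ 1 - t) (q - 1)]
    push_cast
    ring
  rw [hbeta, ← Complex.ofReal_add, Complex.Gamma_ofReal, Complex.Gamma_ofReal,
    Complex.Gamma_ofReal, ← Complex.ofReal_mul, ← Complex.ofReal_mul,
    Complex.ofReal_inj] at h
  have hne : Real.Gamma (p + q) ≠ 0 := (Real.Gamma_pos_of_pos (by linarith)).ne'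
  field_simp [hne]
  linarith [h]

/-- Integrability of the kernel times a power. -/
lemma integrable_kernel_aux {α a x : ℝ} (hα : α < 0) (hax : a < x) (k : ℕ) :
    IntervalIntegrable (fun t => (x - t) ^ (-α - 1) * (t - a) ^ k) volume a x := by
  have h1 : IntervalIntegrable (fun t => (x - t) ^ (-α - 1)) volume a x := by
    have h0 := intervalIntegral.intervalIntegrable_rpow' (a := x - a) (b := x - x)
      (r := -α - 1) (by linarith)
    simpa using h0.comp_sub_left x
  have h2 : ContinuousOn (fun t : ℝ => (t - a) ^ k) (Set.uIcc a x) :=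
    (continuous_pow k).comp_continuousOn (by fun_prop)
  exact h1.mul_continuousOn h2

/-- The key single-term integral. -/
lemma key_integral_aux {α a x : ℝ} (hα : α < 0) (hax : a < x) (k : ℕ) :
    ∫ t in a..x, (x - t) ^ (-α - 1) * (t - a) ^ k
      = Real.Gamma ((k : ℝ) + 1) * Real.Gamma (-α) / Real.Gamma ((k : ℝ) - α + 1)
        * (x - a) ^ ((k : ℝ) - α) := by
  have hxa : (0:ℝ) < x - a := by linarith
  have hxane : x - a ≠ 0 := hxa.ne'
  have hsub := intervalIntegral.integral_comp_mul_add
    (a := 0) (b := 1) (f := fun t => (x - t) ^ (-α - 1) * (t - a) ^ k) hxane a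
  rw [mul_zero, zero_add, mul_one, sub_add_cancel] at hsub
  -- hsub : ∫ u in 0..1, f ((x-a)*u + a) = (x-a)⁻¹ • ∫ t in a..x, f t
  have hcongr : ∫ u in (0:ℝ)..1,
      (x - ((x - a) * u + a)) ^ (-α - 1) * ((x - a) * u + a - a) ^ k
      = (x - a) ^ (-α - 1) * (x - a) ^ k
        * ∫ u in (0:ℝ)..1, u ^ ((k : ℝ) + 1 - 1) * (1 - u) ^ (-α - 1) := by
    rw [← intervalIntegral.integral_const_mul]
    refine intervalIntegral.integral_congr fun u hu => ?_
    rw [Set.uIcc_of_le zero_le_one] at hu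
    have h1u : (0:ℝ) ≤ 1 - u := by linarith [hu.2]
    have : x - ((x - a) * u + a) = (x - a) * (1 - u) := by ring
    rw [this, Real.mul_rpow hxa.le h1u]
    have : (x - a) * u + a - a = (x - a) * u := by ring
    rw [this, mul_pow]
    rw [show (k : ℝ) + 1 - 1 = (k : ℝ) by ring, Real.rpow_natCast]
    ring
  rw [hcongr, real_beta_aux (by positivity) (by linarith : (0:ℝ) < -α)] at hsub
  rw [smul_eq_mul] at hsub
  have hint : ∫ t in a..x, (x - t) ^ (-α - 1) * (t - a) ^ k
      = (x - a) * ((x - a) ^ (-α - 1) * (x - a) ^ k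
        * (Real.Gamma ((k : ℝ) + 1) * Real.Gamma (-α) / Real.Gamma ((k : ℝ) + 1 + -α))) := by
    rw [hsub]; field_simp
  rw [hint]
  have hpow : (x - a) * ((x - a) ^ (-α - 1) * (x - a) ^ k) = (x - a) ^ ((k : ℝ) - α) := by
    rw [← Real.rpow_natCast (x - a) k, ← Real.rpow_add hxa]
    nth_rewrite 1 [← Real.rpow_one (x - a)]
    rw [← Real.rpow_add hxa]
    congr 1
    ring
  rw [show (k : ℝ) + 1 + -α = (k : ℝ) - α + 1 by ring]
  rw [show (x - a) * ((x - a) ^ (-α - 1) * (x - a) ^ k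
        * (Real.Gamma ((k : ℝ) + 1) * Real.Gamma (-α) / Real.Gamma ((k : ℝ) - α + 1)))
      = (x - a) * ((x - a) ^ (-α - 1) * (x - a) ^ k)
        * (Real.Gamma ((k : ℝ) + 1) * Real.Gamma (-α) / Real.Gamma ((k : ℝ) - α + 1)) by ring,
    hpow]
  ring

/-- Term-by-term Riemann–Liouville fractional integration (`α < 0`) of a
function given by a power series around `a` whose radius of convergence
exceeds `x - a`:
`(1/Γ(-α)) ∫_a^x (x-t)^{-α-1} f(t) dt
  = Σ_k c_k · Γ(k+1)/Γ(k-α+1) · (x-a)^{k-α}`, the series being convergent. -/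
theorem riemannLiouville_deriv_powerSeries_neg_order
    (f : ℝ → ℝ) (c : ℕ → ℝ) (a x α R : ℝ) (hax : a < x) (hα : α < 0)
    (hR : x - a < R) (hRsum : Summable fun k => |c k| * R ^ k)
    (hf : ∀ t, |t - a| < R → HasSum (fun k => c k * (t - a) ^ k) (f t)) :
    HasSum
      (fun k : ℕ => c k * (Real.Gamma ((k : ℝ) + 1) / Real.Gamma ((k : ℝ) - α + 1))
        * (x - a) ^ ((k : ℝ) - α))
      ((1 / Real.Gamma (-α)) * ∫ t in a..x, (x - t) ^ (-α - 1) * f t) := by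
  have hxa : (0:ℝ) < x - a := by linarith
  have hR0 : (0:ℝ) < R := lt_trans hxa hR
  set F : ℕ → ℝ → ℝ := fun k t => c k * ((x - t) ^ (-α - 1) * (t - a) ^ k) with hFdef
  have hFii : ∀ k, IntervalIntegrable (F k) volume a x :=
    fun k => (integrable_kernel_aux hα hax k).const_mul (c k)
  have hFint : ∀ k, Integrable (F k) (volume.restrict (Set.Ioc a x)) := fun k => (hFii k).1
  -- the kernel alone is integrable
  have hker : Integrable (fun t => (x - t) ^ (-α - 1)) (volume.restrict (Set.Ioc a x)) := by
    have := integrable_kernel_aux hα hax 0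
    exact (by simpa using this.1 : IntegrableOn (fun t => (x - t) ^ (-α - 1)) (Set.Ioc a x) volume)
  -- bound on norm integrals
  have hnorm_le : ∀ k, (∫ t in Set.Ioc a x, ‖F k t‖)
      ≤ |c k| * R ^ k * ∫ t in Set.Ioc a x, (x - t) ^ (-α - 1) := by
    intro k
    rw [← MeasureTheory.integral_const_mul]
    refine MeasureTheory.setIntegral_mono_on ((hFint k).norm) ?_ measurableSet_Ioc ?_
    · exact (hker.const_mul _)
    · intro t ht
      have htx : (0:ℝ) ≤ x - t := by linarith [ht.2]
      have hta : (0:ℝ) ≤ t - a := by linarith [ht.1]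
      have hkpos : (0:ℝ) ≤ (x - t) ^ (-α - 1) := Real.rpow_nonneg htx _
      rw [hFdef]
      simp only [norm_mul, Real.norm_eq_abs]
      rw [abs_of_nonneg hkpos, abs_of_nonneg (pow_nonneg hta k)]
      have h1 : (t - a) ^ k ≤ R ^ k := pow_le_pow_left₀ hta (by linarith [ht.2, ht.1]) k
      calc |c k| * ((x - t) ^ (-α - 1) * (t - a) ^ k)
          ≤ |c k| * ((x - t) ^ (-α - 1) * R ^ k) := by
            apply mul_le_mul_of_nonneg_left _ (abs_nonneg _)
            exact mul_le_mul_of_nonneg_left h1 hkpos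
        _ = |c k| * R ^ k * (x - t) ^ (-α - 1) := by ring
  have hnorm_sum : Summable fun k => ∫ t in Set.Ioc a x, ‖F k t‖ := by
    refine Summable.of_nonneg_of_le (fun k => ?_) (fun k => hnorm_le k)
      ((hRsum.mul_right _))
    exact MeasureTheory.integral_nonneg fun t => norm_nonneg _
  have hsum := MeasureTheory.hasSum_integral_of_summable_integral_norm hFint hnorm_sum
  -- identify the integral of the tsum
  have htsum_eq : ∫ t in Set.Ioc a x, (∑' k, F k t)
      = ∫ t in Set.Ioc a x, (x - t) ^ (-α - 1) * f t := by
    refine MeasureTheory.setIntegral_congr_fun measurableSet_Ioc fun t ht => ?_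
    have htR : |t - a| < R := by
      rw [abs_of_nonneg (by linarith [ht.1] : (0:ℝ) ≤ t - a)]
      linarith [ht.2]
    have hft := (hf t htR).mul_left ((x - t) ^ (-α - 1))
    have : (fun k => (x - t) ^ (-α - 1) * (c k * (t - a) ^ k)) = fun k => F k t := by
      funext k; rw [hFdef]; ring
    rw [this] at hft
    exact hft.tsum_eq
  rw [htsum_eq] at hsum
  -- identify each term
  have hterm : ∀ k, (∫ t in Set.Ioc a x, F k t)
      = c k * (Real.Gamma ((k : ℝ) + 1) * Real.Gamma (-α) / Real.Gamma ((k : ℝ) - α + 1)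
        * (x - a) ^ ((k : ℝ) - α)) := by
    intro k
    rw [← intervalIntegral.integral_of_le hax.le]
    rw [hFdef]
    rw [intervalIntegral.integral_const_mul, key_integral_aux hα hax k]
  -- finish
  have hΓ : Real.Gamma (-α) ≠ 0 := (Real.Gamma_pos_of_pos (by linarith)).ne'
  have hfinal := hsum.mul_left (1 / Real.Gamma (-α))
  rw [← intervalIntegral.integral_of_le hax.le] at hfinal
  convert hfinal using 2 with k
  · rfl
  rw [hterm k]
  field_simp
end

section
/- Let a < x be real numbers, let α > 0 be a non-integer real number with n = ⌈α⌉, and let f be given on [a, x] by a convergent power series f(t) = Σ_{k=0}^∞ c_k (t − a)^k whose radius of convergence exceeds x − a. Then the Riemann–Liouville fractional derivative of order α of f with base point a can be computed term by term: the n-th derivative with respect to x of y ↦ (1/Γ(n−α)) ∫_a^y (y − t)^{n−α−1} f(t) dt, evaluated at x, equals Σ_{k=0}^∞ c_k · (Γ(k+1)/Γ(k−α+1)) · (x − a)^{k−α}, the series on the right-hand side being convergent. -/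
open Finset in
lemma rl_gamma_prod (s : ℝ) (m : ℕ) (h : ∀ i : ℕ, i < m → s - i ≠ 0) :
    Real.Gamma (s + 1) = (∏ i ∈ Finset.range m, (s - i)) * Real.Gamma (s + 1 - m) := by
  induction m with
  | zero => simp
  | succ m ih =>
    have h' : ∀ i : ℕ, i < m → s - i ≠ 0 := fun i hi => h i (hi.trans (Nat.lt_succ_self m))
    rw [ih h', Finset.prod_range_succ]
    have h1 : s + 1 - m = (s - m) + 1 := by ring
    rw [h1, Real.Gamma_add_one (h m (Nat.lt_succ_self m))]
    have h2 : s + 1 - ((m : ℕ) + 1 : ℕ) = s - m := by push_cast; ring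
    rw [h2]; ring

lemma rl_aux_summable (m : ℕ) (C : ℝ) {r : ℝ} (h1 : ‖r‖ < 1) :
    Summable fun k : ℕ => ((k : ℝ) + C) ^ m * r ^ k := by
  have key : ∀ k : ℕ, ((k : ℝ) + C) ^ m * r ^ k
      = ∑ i ∈ Finset.range (m + 1), (C ^ (m - i) * (m.choose i)) * ((k : ℝ) ^ i * r ^ k) := by
    intro k
    rw [add_pow, Finset.sum_mul]
    congr 1; ext i; ring
  rw [funext key]
  exact summable_sum fun i _ =>
    ((summable_pow_mul_geometric_of_norm_lt_one i h1).mul_left _)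

lemma rl_betaReal (b : ℝ) (hb : 0 < b) (k : ℕ) :
    ∫ v in (0:ℝ)..1, v ^ (b - 1) * (1 - v) ^ k
      = Real.Gamma b * Real.Gamma ((k : ℝ) + 1) / Real.Gamma (b + k + 1) := by
  have hs : 0 < (Complex.ofReal b).re := by simpa using hb
  have ht : 0 < (((k : ℂ) + 1)).re := by simp; positivity
  have h1 := Complex.Gamma_mul_Gamma_eq_betaIntegral hs ht
  have h2 : Complex.betaIntegral b ((k : ℂ) + 1)
      = ((∫ v in (0:ℝ)..1, v ^ (b - 1) * (1 - v) ^ k : ℝ) : ℂ) := by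
    rw [Complex.betaIntegral, ← intervalIntegral.integral_ofReal]
    apply intervalIntegral.integral_congr
    intro v hv
    rw [Set.uIcc_of_le (by norm_num : (0:ℝ) ≤ 1)] at hv
    obtain ⟨hv0, hv1⟩ := hv
    have e1 : (v : ℂ) ^ ((b : ℂ) - 1) = ((v ^ (b - 1) : ℝ) : ℂ) := by
      rw [Complex.ofReal_cpow hv0]; push_cast; ring_nf
    have e2 : (1 - (v : ℂ)) ^ ((k : ℂ) + 1 - 1) = (((1 - v) ^ k : ℝ) : ℂ) := by
      have : (k : ℂ) + 1 - 1 = ((k : ℕ) : ℂ) := by ring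
      rw [this, Complex.cpow_natCast]; push_cast; ring
    simp only [e1, e2]; push_cast; ring
  rw [h2] at h1
  have h3 : (b : ℂ) + ((k : ℂ) + 1) = ((b + k + 1 : ℝ) : ℂ) := by push_cast; ring
  rw [h3] at h1
  have h4 : ((k : ℂ) + 1) = (((k : ℝ) + 1 : ℝ) : ℂ) := by push_cast; ring
  rw [h4] at h1
  rw [Complex.Gamma_ofReal, Complex.Gamma_ofReal, Complex.Gamma_ofReal] at h1
  have h5 : Real.Gamma b * Real.Gamma ((k : ℝ) + 1)
      = Real.Gamma (b + k + 1) * ∫ v in (0:ℝ)..1, v ^ (b - 1) * (1 - v) ^ k := by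
    exact_mod_cast h1
  have h6 : Real.Gamma (b + k + 1) ≠ 0 :=
    (Real.Gamma_pos_of_pos (by positivity)).ne'
  field_simp [h6]
  linarith [h5]

lemma rl_subst (b : ℝ) (k : ℕ) (a y : ℝ) (hy : a < y) :
    ∫ t in a..y, (y - t) ^ (b - 1) * (t - a) ^ k
      = (y - a) ^ (b + (k : ℝ)) * ∫ v in (0:ℝ)..1, v ^ (b - 1) * (1 - v) ^ k := by
  have hya : 0 < y - a := by linarith
  -- step 1 : t ↦ y - u
  have h1 : ∫ t in a..y, (y - t) ^ (b - 1) * (t - a) ^ k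
      = ∫ u in (0:ℝ)..(y - a), u ^ (b - 1) * (y - a - u) ^ k := by
    have := intervalIntegral.integral_comp_sub_left (a := a) (b := y)
      (fun u => u ^ (b - 1) * (y - a - u) ^ k) y
    simp only [sub_self] at this
    rw [← this]
    apply intervalIntegral.integral_congr
    intro t _
    simp only []
    have : y - a - (y - t) = t - a := by ring
    rw [this]
  -- step 2 : u ↦ (y-a) v
  have h2 : ∫ v in (0:ℝ)..1, ((y - a) * v) ^ (b - 1) * (y - a - (y - a) * v) ^ k
      = (y - a)⁻¹ • ∫ u in ((y-a)*0)..((y-a)*1), u ^ (b - 1) * (y - a - u) ^ k :=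
    intervalIntegral.integral_comp_mul_left (fun u => u ^ (b - 1) * (y - a - u) ^ k) hya.ne'
  simp only [mul_zero, mul_one, smul_eq_mul] at h2
  have h3 : ∫ u in (0:ℝ)..(y - a), u ^ (b - 1) * (y - a - u) ^ k
      = (y - a) * ∫ v in (0:ℝ)..1, ((y - a) * v) ^ (b - 1) * (y - a - (y - a) * v) ^ k := by
    rw [h2]; field_simp
  -- step 3 : simplify integrand on [0,1]
  have h4 : ∫ v in (0:ℝ)..1, ((y - a) * v) ^ (b - 1) * (y - a - (y - a) * v) ^ k
      = (y - a) ^ (b - 1) * (y - a) ^ k * ∫ v in (0:ℝ)..1, v ^ (b - 1) * (1 - v) ^ k := by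
    rw [← intervalIntegral.integral_const_mul]
    apply intervalIntegral.integral_congr
    intro v hv
    rw [Set.uIcc_of_le (by norm_num : (0:ℝ) ≤ 1)] at hv
    show ((y - a) * v) ^ (b - 1) * (y - a - (y - a) * v) ^ k
      = (y - a) ^ (b - 1) * (y - a) ^ k * (v ^ (b - 1) * (1 - v) ^ k)
    have e1 : ((y - a) * v) ^ (b - 1) = (y - a) ^ (b - 1) * v ^ (b - 1) :=
      Real.mul_rpow hya.le hv.1
    have e2 : (y - a - (y - a) * v) ^ k = (y - a) ^ k * (1 - v) ^ k := by
      rw [← mul_pow]; ring_nf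
    rw [e1, e2]; ring
  have e3 : (y - a) ^ (b + (k : ℝ)) = (y - a) * ((y - a) ^ (b - 1) * (y - a) ^ k) := by
    rw [← Real.rpow_natCast (y - a) k, ← Real.rpow_add hya,
      show b + (k : ℝ) = 1 + (b - 1 + k) by ring, Real.rpow_add hya, Real.rpow_one]
  rw [h1, h3, h4, e3]; ring
open MeasureTheory intervalIntegral in
lemma rl_stepC (f : ℝ → ℝ) (c : ℕ → ℝ) (a R b : ℝ) (hb0 : 0 < b)
    (hRsum : Summable fun k => |c k| * R ^ k)
    (hf : ∀ t, |t - a| < R → HasSum (fun k => c k * (t - a) ^ k) (f t))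
    (y : ℝ) (hy1 : a < y) (hy2 : y - a < R) :
    HasSum
      (fun k => c k * Real.Gamma ((k : ℝ) + 1) / Real.Gamma ((k : ℝ) + b + 1)
        * (y - a) ^ ((k : ℝ) + b))
      ((1 / Real.Gamma b) * ∫ t in a..y, (y - t) ^ (b - 1) * f t) := by
  have hya : 0 < y - a := by linarith
  set μ : Measure ℝ := volume.restrict (Set.Ioc a y) with hμ
  set F : ℕ → ℝ → ℝ := fun k t => (y - t) ^ (b - 1) * (c k * (t - a) ^ k) with hF
  -- integrability of the rpow factor
  have i1 : IntervalIntegrable (fun t => (y - t) ^ (b - 1)) volume a y := by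
    have h := (intervalIntegrable_rpow' (a := (0:ℝ)) (b := y - a) (r := b - 1)
      (by linarith)).comp_sub_left y
    exact (by simpa using h : IntervalIntegrable _ volume y a).symm
  have hInt : ∀ k, Integrable (F k) μ := by
    intro k
    have : IntervalIntegrable (F k) volume a y :=
      i1.mul_continuousOn (Continuous.continuousOn (by continuity))
    exact (intervalIntegrable_iff_integrableOn_Ioc_of_le hy1.le).mp this
  -- pointwise sums
  have hpt : ∀ t ∈ Set.Ioc a y, HasSum (fun k => F k t) ((y - t) ^ (b - 1) * f t) := by
    intro t ht
    refine ((hf t ?_).mul_left _)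
    rw [abs_lt]; constructor <;> [linarith [ht.1]; linarith [ht.2]]
  -- norm bounds
  have hK : IntegrableOn (fun t => (y - t) ^ (b - 1)) (Set.Ioc a y) volume :=
    (intervalIntegrable_iff_integrableOn_Ioc_of_le hy1.le).mp i1
  set K : ℝ := ∫ t in Set.Ioc a y, (y - t) ^ (b - 1) with hKdef
  have hK0 : 0 ≤ K := by
    apply setIntegral_nonneg measurableSet_Ioc
    intro t ht
    exact Real.rpow_nonneg (by linarith [ht.2]) _
  have hNormBound : ∀ k, (∫ t, ‖F k t‖ ∂μ) ≤ |c k| * R ^ k * K := by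
    intro k
    have hle : ∀ t ∈ Set.Ioc a y, ‖F k t‖ ≤ (y - t) ^ (b - 1) * (|c k| * R ^ k) := by
      intro t ht
      have h1 : (0:ℝ) ≤ (y - t) ^ (b - 1) := Real.rpow_nonneg (by linarith [ht.2]) _
      have h2 : |t - a| ^ k ≤ R ^ k := by
        apply pow_le_pow_left₀ (abs_nonneg _)
        rw [abs_of_pos (by linarith [ht.1] : (0:ℝ) < t - a)]
        linarith [ht.2]
      calc ‖F k t‖ = (y - t) ^ (b - 1) * (|c k| * |t - a| ^ k) := by
            rw [hF]; simp [abs_mul, abs_of_nonneg h1, abs_pow]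
        _ ≤ (y - t) ^ (b - 1) * (|c k| * R ^ k) := by
            apply mul_le_mul_of_nonneg_left _ h1
            exact mul_le_mul_of_nonneg_left h2 (abs_nonneg _)
    calc (∫ t, ‖F k t‖ ∂μ) ≤ ∫ t in Set.Ioc a y, (y - t) ^ (b - 1) * (|c k| * R ^ k) := by
          rw [hμ]
          apply setIntegral_mono_on ((hInt k).norm) (hK.mul_const _) measurableSet_Ioc hle
      _ = |c k| * R ^ k * K := by rw [MeasureTheory.integral_mul_const]; ring
  have hNorm : Summable fun k => ∫ t, ‖F k t‖ ∂μ := by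
    apply Summable.of_nonneg_of_le (fun k => integral_nonneg (fun t => norm_nonneg _))
      hNormBound
    exact hRsum.mul_right K
  -- interchange
  have H := hasSum_integral_of_summable_integral_norm hInt hNorm
  have hval : (∫ t, (∑' k, F k t) ∂μ) = ∫ t in a..y, (y - t) ^ (b - 1) * f t := by
    rw [integral_of_le hy1.le, hμ]
    apply setIntegral_congr_fun measurableSet_Ioc
    intro t ht
    exact (hpt t ht).tsum_eq
  rw [hval] at H
  have hterm : ∀ k, (∫ t, F k t ∂μ)
      = Real.Gamma b * (c k * Real.Gamma ((k : ℝ) + 1) / Real.Gamma ((k : ℝ) + b + 1)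
          * (y - a) ^ ((k : ℝ) + b)) := by
    intro k
    have e1 : (∫ t, F k t ∂μ) = c k * ∫ t in a..y, (y - t) ^ (b - 1) * (t - a) ^ k := by
      rw [hμ, ← integral_of_le hy1.le, ← intervalIntegral.integral_const_mul]
      apply intervalIntegral.integral_congr
      intro t _; rw [hF]; ring
    rw [e1, rl_subst b k a y hy1, rl_betaReal b hb0 k]
    have : (k : ℝ) + b + 1 = b + k + 1 := by ring
    rw [this]
    have : b + (k : ℝ) = (k : ℝ) + b := by ring
    rw [this]
    ring
  have H2 := H.mul_left (1 / Real.Gamma b)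
  have hΓ : Real.Gamma b ≠ 0 := (Real.Gamma_pos_of_pos hb0).ne'
  convert H2 using 1
  · rfl
  funext k
  rw [hterm k]
  field_simp

/-- Term-by-term Riemann–Liouville fractional differentiation (`α > 0`
non-integer, `n = ⌈α⌉`) of a function given by a power series around `a`
whose radius of convergence exceeds `x - a`:
`(dⁿ/dxⁿ)[ (1/Γ(n-α)) ∫_a^x (x-t)^{n-α-1} f(t) dt ]
  = Σ_k c_k · Γ(k+1)/Γ(k-α+1) · (x-a)^{k-α}`, the series being convergent. -/
theorem riemannLiouville_deriv_powerSeries_pos_order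
    (f : ℝ → ℝ) (c : ℕ → ℝ) (a x α R : ℝ) (n : ℕ) (hax : a < x) (hα : 0 < α)
    (hαint : ∀ m : ℤ, α ≠ (m : ℝ)) (hn : n = ⌈α⌉₊)
    (hR : x - a < R) (hRsum : Summable fun k => |c k| * R ^ k)
    (hf : ∀ t, |t - a| < R → HasSum (fun k => c k * (t - a) ^ k) (f t)) :
    HasSum
      (fun k : ℕ => c k * (Real.Gamma ((k : ℝ) + 1) / Real.Gamma ((k : ℝ) - α + 1))
        * (x - a) ^ ((k : ℝ) - α))
      (iteratedDeriv n
        (fun y => (1 / Real.Gamma ((n : ℝ) - α)) *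
          ∫ t in a..y, (y - t) ^ ((n : ℝ) - α - 1) * f t) x) := by
  have hαn : α ≠ (n : ℝ) := by simpa using hαint (n : ℤ)
  have hα_lt : α < (n : ℝ) := lt_of_le_of_ne (hn ▸ Nat.le_ceil α) hαn
  have hn_lt : (n : ℝ) < α + 1 := hn ▸ Nat.ceil_lt_add_one hα.le
  set b : ℝ := (n : ℝ) - α with hbdef
  have hb0 : 0 < b := by rw [hbdef]; linarith
  have hb1 : b < 1 := by rw [hbdef]; linarith
  have hbZ : ∀ m : ℤ, b ≠ (m : ℝ) := by
    intro m hm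
    apply hαint ((n : ℤ) - m)
    rw [hbdef] at hm; push_cast; linarith
  have hfac : ∀ k i : ℕ, (k : ℝ) + b - i ≠ 0 := by
    intro k i h
    apply hbZ ((i : ℤ) - k)
    push_cast; linarith
  set g : ℝ → ℝ := fun y => 1 / Real.Gamma b * ∫ t in a..y, (y - t) ^ (b - 1) * f t
    with hgdef
  have hxa : 0 < x - a := by linarith
  have hR0 : 0 < R := lt_trans hxa hR
  set δ : ℝ := (x - a) / 2 with hδdef
  set σ : ℝ := (x - a + R) / 2 with hσdef
  set ρ : ℝ := (σ + R) / 2 with hρdef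
  have hδ0 : 0 < δ := by rw [hδdef]; linarith
  have hσ0 : 0 < σ := by rw [hσdef]; linarith
  have hσR : σ < R := by rw [hσdef]; linarith
  have hσρ : σ < ρ := by rw [hρdef]; linarith
  have hρR : ρ < R := by rw [hρdef]; linarith
  have hρ0 : 0 < ρ := lt_trans hσ0 hσρ
  set T : Set ℝ := Set.Ioo (a + δ) (a + σ) with hTdef
  have hxT : x ∈ T := by
    rw [hTdef]
    constructor
    · rw [hδdef]; linarith
    · rw [hσdef]; linarith
  have hT_open : IsOpen T := isOpen_Ioo
  have hT_conn : IsPreconnected T := isPreconnected_Ioo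
  have hmemT : ∀ y ∈ T, δ < y - a ∧ y - a < σ := by
    intro y hy
    rw [hTdef] at hy
    exact ⟨by linarith [hy.1], by linarith [hy.2]⟩
  -- base representation
  have hP0 : ∀ y, a < y → y - a < R →
      HasSum (fun k => c k * Real.Gamma ((k : ℝ) + 1) / Real.Gamma ((k : ℝ) + b + 1)
        * (y - a) ^ ((k : ℝ) + b)) (g y) := by
    intro y h1 h2
    rw [hgdef]
    exact rl_stepC f c a R b hb0 hRsum hf y h1 h2
  -- uniform bound on coefficients
  obtain ⟨M, hM⟩ : ∃ M, ∀ k : ℕ,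
      |c k * Real.Gamma ((k : ℝ) + 1) / Real.Gamma ((k : ℝ) + b + 1) * ρ ^ ((k : ℝ) + b)| ≤ M := by
    have hsum := (hP0 (a + ρ) (by linarith) (by rw [add_sub_cancel_left]; exact hρR)).summable
    rw [add_sub_cancel_left] at hsum
    have := (hsum.tendsto_atTop_zero.abs).bddAbove_range
    obtain ⟨M, hM⟩ := this
    exact ⟨M, fun k => hM (Set.mem_range_self k)⟩
  have hM0 : 0 ≤ M := le_trans (abs_nonneg _) (hM 0)
  have hdk : ∀ k : ℕ, |c k * Real.Gamma ((k : ℝ) + 1) / Real.Gamma ((k : ℝ) + b + 1)| * ρ ^ k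
      ≤ M / ρ ^ b := by
    intro k
    have hρb : 0 < ρ ^ b := Real.rpow_pos_of_pos hρ0 _
    rw [le_div_iff₀ hρb]
    have e : |c k * Real.Gamma ((k : ℝ) + 1) / Real.Gamma ((k : ℝ) + b + 1)| * ρ ^ k * ρ ^ b
        = |c k * Real.Gamma ((k : ℝ) + 1) / Real.Gamma ((k : ℝ) + b + 1) * ρ ^ ((k : ℝ) + b)| := by
      rw [abs_mul, abs_of_nonneg (Real.rpow_nonneg hρ0.le _), Real.rpow_add hρ0,
        Real.rpow_natCast]
      ring
    rw [e]; exact hM k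
  -- the key induction
  have key : ∀ j : ℕ, ∀ y ∈ T,
      HasSum (fun k => c k * Real.Gamma ((k : ℝ) + 1) / Real.Gamma ((k : ℝ) + b + 1)
        * (∏ i ∈ Finset.range j, ((k : ℝ) + b - i)) * (y - a) ^ ((k : ℝ) + b - j))
      (iteratedDeriv j g y) := by
    intro j
    induction j with
    | zero =>
      intro y hy
      obtain ⟨hy1, hy2⟩ := hmemT y hy
      rw [iteratedDeriv_zero]
      have h := hP0 y (by linarith) (by linarith)
      have hfe : (fun k : ℕ => c k * Real.Gamma ((k : ℝ) + 1) / Real.Gamma ((k : ℝ) + b + 1)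
          * (∏ i ∈ Finset.range 0, ((k : ℝ) + b - i)) * (y - a) ^ ((k : ℝ) + b - (0 : ℕ)))
          = fun k : ℕ => c k * Real.Gamma ((k : ℝ) + 1) / Real.Gamma ((k : ℝ) + b + 1)
          * (y - a) ^ ((k : ℝ) + b) := by
        funext k
        simp [Finset.prod_range_zero]
      rw [hfe]; exact h
    | succ j ih =>
      intro y hy
      set r : ℝ := σ / ρ with hrdef
      have hr0 : 0 ≤ r := by positivity
      have hr1 : ‖r‖ < 1 := by
        rw [Real.norm_eq_abs, abs_of_nonneg hr0, hrdef, div_lt_one hρ0]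
        exact hσρ
      set CC : ℝ := δ ^ (b - ((j : ℝ) + 1)) with hCCdef
      have hCC0 : 0 < CC := Real.rpow_pos_of_pos hδ0 _
      set M' : ℝ := M / ρ ^ b with hM'def
      have hM'0 : 0 ≤ M' := div_nonneg hM0 (Real.rpow_pos_of_pos hρ0 _).le
      set u : ℕ → ℝ := fun k => M' * CC * (((k : ℝ) + ((j : ℝ) + 2)) ^ (j + 1) * r ^ k)
        with hudef
      have hu : Summable u := (rl_aux_summable (j + 1) ((j : ℝ) + 2) hr1).mul_left _
      -- derivative of each term
      have hderiv : ∀ (k : ℕ), ∀ z ∈ T,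
          HasDerivAt (fun w => c k * Real.Gamma ((k : ℝ) + 1) / Real.Gamma ((k : ℝ) + b + 1)
            * (∏ i ∈ Finset.range j, ((k : ℝ) + b - i)) * (w - a) ^ ((k : ℝ) + b - j))
          (c k * Real.Gamma ((k : ℝ) + 1) / Real.Gamma ((k : ℝ) + b + 1)
            * (∏ i ∈ Finset.range (j + 1), ((k : ℝ) + b - i))
            * (z - a) ^ ((k : ℝ) + b - (j + 1 : ℕ))) z := by
        intro k z hz
        obtain ⟨hz1, hz2⟩ := hmemT z hz
        have hz0 : (0 : ℝ) < z - a := lt_trans hδ0 hz1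
        have h1 : HasDerivAt (fun w : ℝ => (w - a) ^ ((k : ℝ) + b - j))
            (1 * ((k : ℝ) + b - j) * (z - a) ^ ((k : ℝ) + b - j - 1)) z :=
          ((hasDerivAt_id z).sub_const a).rpow_const (Or.inl hz0.ne')
        have h2 := h1.const_mul (c k * Real.Gamma ((k : ℝ) + 1)
          / Real.Gamma ((k : ℝ) + b + 1) * ∏ i ∈ Finset.range j, ((k : ℝ) + b - i))
        refine h2.congr_deriv ?_
        rw [Finset.prod_range_succ]
        have he : (k : ℝ) + b - ((j + 1 : ℕ) : ℝ) = (k : ℝ) + b - j - 1 := by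
          push_cast; ring
        rw [he]; ring
      -- bound on derivative terms
      have hbound : ∀ (k : ℕ), ∀ z ∈ T,
          ‖c k * Real.Gamma ((k : ℝ) + 1) / Real.Gamma ((k : ℝ) + b + 1)
            * (∏ i ∈ Finset.range (j + 1), ((k : ℝ) + b - i))
            * (z - a) ^ ((k : ℝ) + b - (j + 1 : ℕ))‖ ≤ u k := by
        intro k z hz
        obtain ⟨hz1, hz2⟩ := hmemT z hz
        have hz0 : (0 : ℝ) < z - a := lt_trans hδ0 hz1
        set X : ℝ := |c k * Real.Gamma ((k : ℝ) + 1) / Real.Gamma ((k : ℝ) + b + 1)| with hXdef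
        set Q : ℝ := |∏ i ∈ Finset.range (j + 1), ((k : ℝ) + b - i)| with hQdef
        have hX0 : 0 ≤ X := abs_nonneg _
        have hQ0 : 0 ≤ Q := abs_nonneg _
        have e1 : (z - a) ^ ((k : ℝ) + b - ((j + 1 : ℕ) : ℝ))
            = (z - a) ^ (k : ℝ) * (z - a) ^ (b - ((j : ℝ) + 1)) := by
          rw [← Real.rpow_add hz0]; congr 1; push_cast; ring
        have hnorm : ‖c k * Real.Gamma ((k : ℝ) + 1) / Real.Gamma ((k : ℝ) + b + 1)
            * (∏ i ∈ Finset.range (j + 1), ((k : ℝ) + b - i))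
            * (z - a) ^ ((k : ℝ) + b - (j + 1 : ℕ))‖
            = X * Q * ((z - a) ^ (k : ℝ) * (z - a) ^ (b - ((j : ℝ) + 1))) := by
          rw [Real.norm_eq_abs, abs_mul, abs_mul, e1,
            abs_of_nonneg (by positivity : (0:ℝ) ≤ (z - a) ^ (k : ℝ) * (z - a) ^ (b - ((j : ℝ) + 1)))]
        have hA : (z - a) ^ (k : ℝ) ≤ σ ^ k := by
          rw [Real.rpow_natCast]
          exact pow_le_pow_left₀ hz0.le (le_of_lt hz2) k
        have hB : (z - a) ^ (b - ((j : ℝ) + 1)) ≤ CC := by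
          rw [hCCdef]
          exact Real.rpow_le_rpow_of_nonpos hδ0 hz1.le (by linarith)
        have hQle : Q ≤ ((k : ℝ) + ((j : ℝ) + 2)) ^ (j + 1) := by
          rw [hQdef, Finset.abs_prod]
          have : ∀ i ∈ Finset.range (j + 1), |(k : ℝ) + b - i| ≤ (k : ℝ) + ((j : ℝ) + 2) := by
            intro i hi
            have hij : (i : ℝ) ≤ (j : ℝ) := by
              exact_mod_cast Nat.lt_succ_iff.mp (Finset.mem_range.mp hi)
            have hk0 : (0 : ℝ) ≤ (k : ℝ) := Nat.cast_nonneg k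
            have hi0 : (0 : ℝ) ≤ (i : ℝ) := Nat.cast_nonneg i
            rw [abs_le]; constructor <;> [linarith; linarith]
          calc (∏ i ∈ Finset.range (j + 1), |(k : ℝ) + b - i|)
              ≤ ∏ _i ∈ Finset.range (j + 1), ((k : ℝ) + ((j : ℝ) + 2)) :=
                Finset.prod_le_prod (fun i _ => abs_nonneg _) this
            _ = ((k : ℝ) + ((j : ℝ) + 2)) ^ (j + 1) := by
                rw [Finset.prod_const, Finset.card_range]
        have hXd : X * σ ^ k ≤ M' * r ^ k := by
          have e2 : σ ^ k = ρ ^ k * r ^ k := by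
            rw [hrdef, ← mul_pow, mul_div_cancel₀ _ hρ0.ne']
          rw [e2, ← mul_assoc]
          exact mul_le_mul_of_nonneg_right (hdk k) (pow_nonneg hr0 k)
        rw [hnorm]
        calc X * Q * ((z - a) ^ (k : ℝ) * (z - a) ^ (b - ((j : ℝ) + 1)))
            ≤ X * Q * (σ ^ k * CC) := by
              apply mul_le_mul_of_nonneg_left _ (by positivity)
              exact mul_le_mul hA hB (Real.rpow_nonneg hz0.le _) (by positivity)
          _ = (X * σ ^ k) * (Q * CC) := by ring
          _ ≤ (M' * r ^ k) * (((k : ℝ) + ((j : ℝ) + 2)) ^ (j + 1) * CC) := by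
              apply mul_le_mul hXd _ (by positivity) (by positivity)
              exact mul_le_mul_of_nonneg_right hQle hCC0.le
          _ = u k := by rw [hudef]; ring
      -- apply term-by-term differentiation
      have hsum_x : Summable (fun k => c k * Real.Gamma ((k : ℝ) + 1)
          / Real.Gamma ((k : ℝ) + b + 1)
          * (∏ i ∈ Finset.range j, ((k : ℝ) + b - i)) * (x - a) ^ ((k : ℝ) + b - j)) :=
        (ih x hxT).summable
      have H := hasDerivAt_tsum_of_isPreconnected hu hT_open hT_conn hderiv hbound hxT hsum_x hy
      have hS : Summable (fun k => c k * Real.Gamma ((k : ℝ) + 1)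
          / Real.Gamma ((k : ℝ) + b + 1)
          * (∏ i ∈ Finset.range (j + 1), ((k : ℝ) + b - i))
          * (y - a) ^ ((k : ℝ) + b - (j + 1 : ℕ))) :=
        Summable.of_norm_bounded hu (fun k => hbound k y hy)
      have hEq : iteratedDeriv (j + 1) g y
          = ∑' k, c k * Real.Gamma ((k : ℝ) + 1) / Real.Gamma ((k : ℝ) + b + 1)
            * (∏ i ∈ Finset.range (j + 1), ((k : ℝ) + b - i))
            * (y - a) ^ ((k : ℝ) + b - (j + 1 : ℕ)) := by
        rw [iteratedDeriv_succ]
        have hev : (fun z => ∑' k, c k * Real.Gamma ((k : ℝ) + 1)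
            / Real.Gamma ((k : ℝ) + b + 1)
            * (∏ i ∈ Finset.range j, ((k : ℝ) + b - i)) * (z - a) ^ ((k : ℝ) + b - j))
            =ᶠ[nhds y] iteratedDeriv j g :=
          Filter.eventually_of_mem (hT_open.mem_nhds hy) (fun z hz => (ih z hz).tsum_eq)
        rw [← hev.deriv_eq]
        exact H.deriv
      rw [hEq]
      exact hS.hasSum
  -- conclude
  have final := key n x hxT
  have hfe : (fun k : ℕ => c k * Real.Gamma ((k : ℝ) + 1) / Real.Gamma ((k : ℝ) + b + 1)
      * (∏ i ∈ Finset.range n, ((k : ℝ) + b - i)) * (x - a) ^ ((k : ℝ) + b - n))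
      = fun k : ℕ => c k * (Real.Gamma ((k : ℝ) + 1) / Real.Gamma ((k : ℝ) - α + 1))
        * (x - a) ^ ((k : ℝ) - α) := by
    funext k
    have hexp : (k : ℝ) + b - n = (k : ℝ) - α := by rw [hbdef]; ring
    have hgam : Real.Gamma ((k : ℝ) + b + 1)
        = (∏ i ∈ Finset.range n, ((k : ℝ) + b - i)) * Real.Gamma ((k : ℝ) - α + 1) := by
      have h := rl_gamma_prod ((k : ℝ) + b) n (fun i _ => hfac k i)
      have he : (k : ℝ) + b + 1 - n = (k : ℝ) - α + 1 := by rw [hbdef]; ring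
      rw [he] at h
      exact h
    have hq0 : (∏ i ∈ Finset.range n, ((k : ℝ) + b - i)) ≠ 0 :=
      Finset.prod_ne_zero_iff.mpr (fun i _ => hfac k i)
    have hΓ2 : Real.Gamma ((k : ℝ) - α + 1) ≠ 0 := by
      apply Real.Gamma_ne_zero
      intro m hm
      apply hαint ((k : ℤ) + 1 + m)
      push_cast; linarith
    have hco : c k * Real.Gamma ((k : ℝ) + 1)
        / ((∏ i ∈ Finset.range n, ((k : ℝ) + b - i)) * Real.Gamma ((k : ℝ) - α + 1))
        * (∏ i ∈ Finset.range n, ((k : ℝ) + b - i))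
        = c k * (Real.Gamma ((k : ℝ) + 1) / Real.Gamma ((k : ℝ) - α + 1)) := by
      field_simp
    rw [hexp, hgam, hco]
  rw [← hfe]
  exact final
end
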